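/- For every 0 < c ≤ 1 there exists a family (a_j)_{j∈ℤ} of nonnegative real numbers such that a_0 = c, ∑_{j∈ℤ} a_j² ≤ 1, only finitely many a_j are nonzero, and ∑_{j∈ℤ} (a_j − a_{j+1})² ≤ 8c⁴. -/

import Mathlib

lemma pyr_sum (N : ℕ) : ∑ j ∈ Finset.Icc (-(N:ℤ)) N, ((N:ℝ) - |(j:ℝ)|) = (N:ℝ)^2 := by
  induction N with
  | zero => simp
  | succ N ih =>
    have h1 : Finset.Icc (-(N+1:ℤ)) (N+1) =
        insert (-(N+1:ℤ)) (insert ((N:ℤ)+1) (Finset.Icc (-(N:ℤ)) N)) := by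
      ext j
      simp only [Finset.mem_Icc, Finset.mem_insert]
      omega
    push_cast
    rw [h1]
    rw [Finset.sum_insert (by simp only [Finset.mem_insert, Finset.mem_Icc]; omega),
        Finset.sum_insert (by simp only [Finset.mem_Icc]; omega)]
    have h2 : ∑ j ∈ Finset.Icc (-(N:ℤ)) N, (((N:ℝ)+1) - |(j:ℝ)|)
        = ∑ j ∈ Finset.Icc (-(N:ℤ)) N, (((N:ℝ) - |(j:ℝ)|) + 1) :=
      Finset.sum_congr rfl (fun x _ => by ring)
    rw [h2, Finset.sum_add_distrib, ih, Finset.sum_const]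
    have hcard : (Finset.Icc (-(N:ℤ)) N).card = 2*N+1 := by
      rw [Int.card_Icc]; omega
    rw [hcard]
    push_cast
    rw [abs_neg, abs_of_nonneg (by positivity : (0:ℝ) ≤ (N:ℝ)+1), nsmul_eq_mul]
    push_cast
    ring

/-- The order `c⁴` of the lower bound of Lemma 6.2 is tight (Remark 6.3). -/
theorem stmt6 (c : ℝ) (hc0 : 0 < c) (hc1 : c ≤ 1) :
    ∃ a : ℤ → ℝ, (∀ j, 0 ≤ a j) ∧ a 0 = c ∧ (∑' j : ℤ, a j ^ 2) ≤ 1 ∧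
      (Function.support a).Finite ∧ (∑' j : ℤ, (a j - a (j + 1)) ^ 2) ≤ 8 * c ^ 4 := by
  rcases le_or_gt (1/2 : ℝ) c with hc | hc
  · -- spike at 0
    refine ⟨fun j => if j = 0 then c else 0, fun j => ?_, by simp, ?_, ?_, ?_⟩
    · dsimp only; split <;> simp [hc0.le]
    · rw [tsum_eq_sum (s := ({0} : Finset ℤ)) (by intro b hb; simp at hb; simp [hb])]
      norm_num
      rw [abs_of_pos hc0]
      exact hc1
    · apply Set.Finite.subset (Set.finite_singleton 0)
      intro j hj
      simp only [Function.mem_support] at hj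
      by_contra h
      simp only [Set.mem_singleton_iff] at h
      simp [h] at hj
    · rw [tsum_eq_sum (s := ({-1, 0} : Finset ℤ))
        (by intro b hb; simp at hb; have h1 : b ≠ 0 := hb.2
            have h2 : b + 1 ≠ 0 := by omega
            simp [h1, h2])]
      rw [Finset.sum_insert (by decide), Finset.sum_singleton]
      norm_num
      have h14 : (1/4:ℝ) ≤ c^2 := by nlinarith
      nlinarith [h14, sq_nonneg c]
  · -- tent function of half-width N
    set N : ℕ := ⌈1/(2*c^2)⌉₊ with hNdef
    have hc2 : c^2 < 1/4 := by nlinarith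
    have hcsq : (0:ℝ) < c^2 := by positivity
    have hN1 : 1/(2*c^2) ≤ (N:ℝ) := Nat.le_ceil _
    have hN2 : (N:ℝ) < 1/(2*c^2) + 1 := Nat.ceil_lt_add_one (by positivity)
    have hNpos : (0:ℝ) < N := lt_of_lt_of_le (by positivity) hN1
    have hNne : (N:ℝ) ≠ 0 := ne_of_gt hNpos
    have ht : (1/(2*c^2)) * (2*c^2) = 1 := by field_simp
    have hNc2 : (N:ℝ) * c^2 ≤ 1 := by
      have := mul_le_mul_of_nonneg_right hN2.le (le_of_lt hcsq)
      nlinarith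
    have h2cN : (1:ℝ) ≤ 2*c^2*N := by
      have := mul_le_mul_of_nonneg_right hN1 (by positivity : (0:ℝ) ≤ 2*c^2)
      nlinarith
    set a : ℤ → ℝ := fun j => c * max ((N:ℝ) - |(j:ℝ)|) 0 / N with ha
    have hzero : ∀ j : ℤ, ((N:ℤ) ≤ j ∨ j ≤ -(N:ℤ)) → a j = 0 := by
      intro j hj
      have habs : (N:ℝ) ≤ |(j:ℝ)| := by
        rcases hj with hj | hj
        · exact le_trans (by exact_mod_cast hj) (le_abs_self _)
        · have : (j:ℝ) ≤ -(N:ℝ) := by exact_mod_cast hj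
          exact le_trans (by linarith [neg_le_abs (j:ℝ)] : (N:ℝ) ≤ -(j:ℝ)) (neg_le_abs _)
      simp only [ha]
      rw [max_eq_right (by linarith)]
      simp
    have hmem : ∀ j : ℤ, j ∈ Finset.Icc (-(N:ℤ)) N → |(j:ℝ)| ≤ N := by
      intro j hj
      rw [Finset.mem_Icc] at hj
      rw [abs_le]
      constructor <;> [exact_mod_cast hj.1; exact_mod_cast hj.2]
    refine ⟨a, fun j => ?_, ?_, ?_, ?_, ?_⟩
    · exact div_nonneg (mul_nonneg hc0.le (le_max_right _ _)) (Nat.cast_nonneg N)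
    · simp only [ha]
      rw [Int.cast_zero, abs_zero, sub_zero, max_eq_left (Nat.cast_nonneg N)]
      field_simp
    · rw [tsum_eq_sum (s := Finset.Icc (-(N:ℤ)) N)
        (by intro b hb
            rw [Finset.mem_Icc] at hb
            rw [hzero b (by omega)]
            ring)]
      have hterm : ∀ j ∈ Finset.Icc (-(N:ℤ)) N,
          a j ^ 2 ≤ c^2/N * ((N:ℝ) - |(j:ℝ)|) := by
        intro j hj
        have hm := hmem j hj
        have hm0 : (0:ℝ) ≤ (N:ℝ) - |(j:ℝ)| := by linarith
        simp only [ha]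
        rw [max_eq_left hm0, div_pow, mul_pow, div_mul_eq_mul_div,
          div_le_div_iff₀ (pow_pos hNpos 2) hNpos]
        have habs0 : (0:ℝ) ≤ |(j:ℝ)| := abs_nonneg _
        nlinarith [mul_le_mul_of_nonneg_left
          (show (N:ℝ) - |(j:ℝ)| ≤ (N:ℝ) by linarith)
          (mul_nonneg (mul_nonneg (sq_nonneg c) hm0) hNpos.le)]
      calc ∑ j ∈ Finset.Icc (-(N:ℤ)) N, a j ^ 2
          ≤ ∑ j ∈ Finset.Icc (-(N:ℤ)) N, c^2/N * ((N:ℝ) - |(j:ℝ)|) :=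
            Finset.sum_le_sum hterm
        _ = c^2/N * (N:ℝ)^2 := by rw [← Finset.mul_sum, pyr_sum]
        _ = (N:ℝ) * c^2 := by field_simp
        _ ≤ 1 := hNc2
    · apply Set.Finite.subset (Finset.Icc (-(N:ℤ)) N).finite_toSet
      intro j hj
      simp only [Finset.coe_Icc, Set.mem_Icc]
      by_contra h
      exact hj (hzero j (by omega))
    · rw [tsum_eq_sum (s := Finset.Icc (-(N:ℤ)) ((N:ℤ)-1))
        (by intro b hb
            rw [Finset.mem_Icc] at hb
            rw [hzero b (by omega), hzero (b+1) (by omega)]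
            ring)]
      have hterm : ∀ j ∈ Finset.Icc (-(N:ℤ)) ((N:ℤ)-1),
          (a j - a (j+1)) ^ 2 ≤ c^2/(N:ℝ)^2 := by
        intro j _
        have key : |a j - a (j+1)| ≤ c/N := by
          have h1 : a j - a (j+1) = c/N * (max ((N:ℝ) - |(j:ℝ)|) 0
              - max ((N:ℝ) - |((j:ℝ)+1)|) 0) := by
            simp only [ha]
            push_cast
            ring
          rw [h1, abs_mul, abs_of_nonneg (by positivity : (0:ℝ) ≤ c/N)]
          have h2 : |max ((N:ℝ) - |(j:ℝ)|) 0 - max ((N:ℝ) - |((j:ℝ)+1)|) 0| ≤ 1 := by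
            refine le_trans (abs_max_sub_max_le_abs _ _ _) ?_
            have : ((N:ℝ) - |(j:ℝ)|) - ((N:ℝ) - |((j:ℝ)+1)|) = |(j:ℝ)+1| - |(j:ℝ)| := by
              ring
            rw [this]
            refine le_trans (abs_abs_sub_abs_le_abs_sub _ _) ?_
            simp
          calc c/N * |max ((N:ℝ) - |(j:ℝ)|) 0 - max ((N:ℝ) - |((j:ℝ)+1)|) 0|
              ≤ c/N * 1 := by
                apply mul_le_mul_of_nonneg_left h2 (by positivity)
            _ = c/N := mul_one _
        calc (a j - a (j+1)) ^ 2 = |a j - a (j+1)| ^ 2 := (sq_abs _).symm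
          _ ≤ (c/N)^2 := by
              apply pow_le_pow_left₀ (abs_nonneg _) key
          _ = c^2/(N:ℝ)^2 := by rw [div_pow]
      calc ∑ j ∈ Finset.Icc (-(N:ℤ)) ((N:ℤ)-1), (a j - a (j+1)) ^ 2
          ≤ (Finset.Icc (-(N:ℤ)) ((N:ℤ)-1)).card • (c^2/(N:ℝ)^2) :=
            Finset.sum_le_card_nsmul _ _ _ hterm
        _ = (2*N : ℕ) • (c^2/(N:ℝ)^2) := by
            congr 1
            rw [Int.card_Icc]
            omega
        _ = 2*(N:ℝ) * (c^2/(N:ℝ)^2) := by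
            rw [nsmul_eq_mul]
            push_cast
            ring
        _ ≤ 8 * c^4 := by
            rw [show 2*(N:ℝ) * (c^2/(N:ℝ)^2) = 2*c^2/N by field_simp,
              div_le_iff₀ hNpos]
            nlinarith [mul_le_mul_of_nonneg_left h2cN (by positivity : (0:ℝ) ≤ 4*c^2)]
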